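/- Let T be a strongly continuous unitary representation of a locally compact σ-compact abelian group G on a Hilbert space H, and let f ∈ H. Then the orbit map t ↦ T^t f is (Bohr) almost periodic (equivalently, has relatively compact range) if and only if the diagonal matrix coefficient t ↦ ⟨f, T^t f⟩ is an almost periodic function G → ℂ. -/

import Mathlib

open scoped InnerProductSpace

/-- A subset `S` of a group `G` is relatively dense if `S * K = G` for some compact `K`. -/
def RelativelyDense {G : Type*} [Mul G] [TopologicalSpace G] (S : Set G) : Prop :=
  ∃ K : Set G, IsCompact K ∧ ∀ g : G, ∃ t ∈ S, ∃ k ∈ K, g = t * k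

/-- Bohr almost periodicity of a continuous function from a topological group to a
normed space: every `ε` admits a relatively dense set of `ε`-almost periods. -/
def BohrAlmostPeriodic {G : Type*} [Group G] [TopologicalSpace G] {X : Type*}
    [NormedAddCommGroup X] (p : G → X) : Prop :=
  Continuous p ∧ ∀ ε > (0 : ℝ),
    RelativelyDense {t : G | ∀ s : G, ‖p (t * s) - p s‖ < ε}

/-- for a strongly continuous unitary representation `T` of a locally compact
σ-compact abelian group `G` on a Hilbert space `H` and `f ∈ H`, the orbit map `t ↦ T^t f`
has relatively compact range (equivalently, is Bohr almost periodic) if and only if the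
diagonal matrix coefficient `t ↦ ⟨f, T^t f⟩` is an almost periodic function `G → ℂ`. -/
theorem stmt0 {G : Type*} [CommGroup G] [TopologicalSpace G] [IsTopologicalGroup G]
    [LocallyCompactSpace G] [SigmaCompactSpace G]
    {H : Type*} [NormedAddCommGroup H] [InnerProductSpace ℂ H] [CompleteSpace H]
    (T : G →* (H ≃ₗᵢ[ℂ] H)) (hT : ∀ g : H, Continuous fun t : G => T t g)
    (f : H) :
    IsCompact (closure (Set.range fun t : G => T t f)) ↔
      BohrAlmostPeriodic fun t : G => (⟪f, T t f⟫_ℂ : ℂ) := by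
  have hTone : T 1 f = f := by rw [map_one]; rfl
  have key : ∀ t s : G, ‖T (t * s) f - T s f‖ = ‖T t f - f‖ := fun t s => by
    have h1 : T (t * s) f = T s (T t f) := by rw [mul_comm, map_mul]; rfl
    rw [h1, ← map_sub (T s : H ≃ₗᵢ[ℂ] H), (T s).norm_map]
  constructor
  · intro hcomp
    refine ⟨Continuous.inner continuous_const (hT f), ?_⟩
    intro ε hε
    set δ := ε / (‖f‖ + 1) with hδ
    have hf1 : (0:ℝ) < ‖f‖ + 1 := by positivity
    have hδ0 : 0 < δ := div_pos hε hf1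
    have htb : TotallyBounded (Set.range fun t : G => T t f) :=
      hcomp.totallyBounded.subset subset_closure
    obtain ⟨s, hsub, hfin, hcov⟩ :=
      (totallyBounded_iff_subset.mp htb) _ (Metric.dist_mem_uniformity hδ0)
    choose! c hc using fun y (hy : y ∈ s) => hsub hy
    refine ⟨c '' s, (hfin.image c).isCompact, fun g => ?_⟩
    have hg : T g f ∈ ⋃ y ∈ s, {x : H | dist x y < δ} := hcov ⟨g, rfl⟩
    simp only [Set.mem_iUnion, Set.mem_setOf_eq] at hg
    obtain ⟨y, hy, hdy⟩ := hg
    refine ⟨g * (c y)⁻¹, ?_, c y, ⟨y, hy, rfl⟩, by group⟩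
    intro u
    have hmain : ‖T (g * (c y)⁻¹) f - f‖ < δ := by
      have hcy : T (c y) f = y := hc y hy
      have := key (g * (c y)⁻¹) (c y)
      rw [inv_mul_cancel_right, hcy] at this
      rw [← this, ← dist_eq_norm]; exact hdy
    calc ‖⟪f, T (g * (c y)⁻¹ * u) f⟫_ℂ - ⟪f, T u f⟫_ℂ‖
        = ‖⟪f, T (g * (c y)⁻¹ * u) f - T u f⟫_ℂ‖ := by rw [← inner_sub_right]
      _ ≤ ‖f‖ * ‖T (g * (c y)⁻¹ * u) f - T u f‖ := norm_inner_le_norm _ _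
      _ = ‖f‖ * ‖T (g * (c y)⁻¹) f - f‖ := by rw [key]
      _ ≤ ‖f‖ * δ := by
          exact mul_le_mul_of_nonneg_left hmain.le (norm_nonneg f)
      _ < (‖f‖ + 1) * δ := by nlinarith
      _ = ε := by rw [hδ]; field_simp
  · rintro ⟨hcont, hap⟩
    have orbitAP : ∀ ε > (0:ℝ), RelativelyDense {t : G | ‖T t f - f‖ < ε} := by
      intro ε hε
      obtain ⟨K, hK, hcov⟩ := hap (ε ^ 2 / 2) (by positivity)
      refine ⟨K, hK, fun g => ?_⟩
      obtain ⟨t, ht, k, hk, hg⟩ := hcov g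
      refine ⟨t, ?_, k, hk, hg⟩
      have h1 : ‖⟪f, T (t * 1) f⟫_ℂ - ⟪f, T 1 f⟫_ℂ‖ < ε ^ 2 / 2 := ht 1
      rw [mul_one, hTone] at h1
      show ‖T t f - f‖ < ε
      have hsq : ‖T t f - f‖ ^ 2 = 2 * RCLike.re (⟪f, f⟫_ℂ - ⟪f, T t f⟫_ℂ) := by
        rw [norm_sub_sq (𝕜 := ℂ), map_sub, inner_self_eq_norm_sq (𝕜 := ℂ)]
        have hre : RCLike.re ⟪T t f, f⟫_ℂ = RCLike.re ⟪f, T t f⟫_ℂ := inner_re_symm (𝕜 := ℂ) _ _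
        rw [hre, (T t).norm_map]; ring
      have hle : ‖T t f - f‖ ^ 2 < ε ^ 2 := by
        rw [hsq]
        calc 2 * RCLike.re (⟪f, f⟫_ℂ - ⟪f, T t f⟫_ℂ)
            ≤ 2 * ‖⟪f, f⟫_ℂ - ⟪f, T t f⟫_ℂ‖ := by
              have := RCLike.re_le_norm (⟪f, f⟫_ℂ - ⟪f, T t f⟫_ℂ)
              linarith
          _ = 2 * ‖⟪f, T t f⟫_ℂ - ⟪f, f⟫_ℂ‖ := by rw [norm_sub_rev]
          _ < 2 * (ε ^ 2 / 2) := by linarith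
          _ = ε ^ 2 := by ring
      exact lt_of_pow_lt_pow_left₀ 2 hε.le hle
    refine TotallyBounded.isCompact_of_isClosed ?_ isClosed_closure
    refine TotallyBounded.closure ?_
    rw [Metric.totallyBounded_iff]
    intro ε hε
    obtain ⟨K, hK, hcov⟩ := orbitAP (ε / 2) (by positivity)
    have hC : IsCompact ((fun k : G => T k f) '' K) := hK.image (hT f)
    obtain ⟨N, hNfin, hNcov⟩ := Metric.totallyBounded_iff.mp hC.totallyBounded (ε / 2) (by positivity)
    refine ⟨N, hNfin, ?_⟩
    rintro x ⟨g, rfl⟩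
    obtain ⟨t, ht, k, hk, rfl⟩ := hcov g
    have h1 : ‖T (t * k) f - T k f‖ < ε / 2 := by rw [key]; exact ht
    have h2 : T k f ∈ ⋃ y ∈ N, Metric.ball y (ε / 2) := hNcov ⟨k, hk, rfl⟩
    simp only [Set.mem_iUnion, Metric.mem_ball] at h2 ⊢
    obtain ⟨y, hy, hdy⟩ := h2
    refine ⟨y, hy, ?_⟩
    calc dist (T (t * k) f) y ≤ dist (T (t * k) f) (T k f) + dist (T k f) y := dist_triangle _ _ _
      _ < ε / 2 + ε / 2 := by rw [dist_eq_norm]; exact add_lt_add h1 hdy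
      _ = ε := by ring
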